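/- The set of EML-expressible complex numbers equals Chow's field 𝔼 of EL numbers, defined as the intersection of all subfields of ℂ closed under exp and the principal-branch log (applied to nonzero elements). -/

import Mathlib

inductive Expr : Type
  | one : Expr
  | E : Expr → Expr → Expr

open Classical in
noncomputable def eval : Expr → Option ℂ
  | Expr.one => some 1
  | Expr.E a b =>
    match eval a, eval b with
    | some x, some y => if y = 0 then none else some (Complex.exp x - Complex.log y)
    | _, _ => none

def ExpLogClosed (F : Subfield ℂ) : Prop :=
  (∀ x ∈ F, Complex.exp x ∈ F) ∧ (∀ x ∈ F, x ≠ 0 → Complex.log x ∈ F)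


open Complex in
def Sp (z : ℂ) : Prop := ∃ e : Expr, eval e = some z

lemma Sp_one : Sp 1 := ⟨Expr.one, rfl⟩

lemma Sp_E {x y : ℂ} (hx : Sp x) (hy : Sp y) (hy0 : y ≠ 0) :
    Sp (Complex.exp x - Complex.log y) := by
  obtain ⟨a, ha⟩ := hx; obtain ⟨b, hb⟩ := hy
  refine ⟨Expr.E a b, ?_⟩
  rw [eval, ha, hb]
  simp [hy0]

lemma Sp_exp {z : ℂ} (h : Sp z) : Sp (Complex.exp z) := by
  simpa [Complex.log_one] using Sp_E h Sp_one one_ne_zero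

open Complex Real

lemma exp_one_im : (Complex.exp 1).im = 0 := by
  simpa using Complex.exp_ofReal_im 1

lemma Sp_zero : Sp 0 := by
  have h2 := Sp_exp (Sp_exp Sp_one)
  have h := Sp_E Sp_one h2 (Complex.exp_ne_zero _)
  rwa [Complex.log_exp (by rw [exp_one_im]; simpa using Real.pi_pos)
    (by rw [exp_one_im]; exact Real.pi_pos.le), sub_self] at h

lemma Sp_one_sub_log {z : ℂ} (h : Sp z) (h0 : z ≠ 0) : Sp (1 - Complex.log z) := by
  simpa [Complex.exp_zero] using Sp_E Sp_zero h h0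

lemma Sp_log {z : ℂ} (h : Sp z) (h0 : z ≠ 0) (harg : z.arg ≠ π) : Sp (Complex.log z) := by
  have hu := Sp_exp (Sp_one_sub_log h h0)
  have hE := Sp_E Sp_zero hu (Complex.exp_ne_zero _)
  rw [Complex.log_exp ?_ ?_] at hE
  · simpa [Complex.exp_zero] using hE
  · simp only [sub_im, one_im, log_im, zero_sub, neg_lt_neg_iff]
    exact lt_of_le_of_ne (Complex.arg_le_pi z) harg
  · simp only [sub_im, one_im, log_im, zero_sub]
    linarith [Complex.neg_pi_lt_arg z]

lemma Sp_sub {x y : ℂ} (hx : Sp x) (hy : Sp y) (hx0 : x ≠ 0) (hxarg : x.arg ≠ π)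
    (h1 : -π < y.im) (h2 : y.im ≤ π) : Sp (x - y) := by
  have hE := Sp_E (Sp_log hx hx0 hxarg) (Sp_exp hy) (Complex.exp_ne_zero _)
  rwa [Complex.exp_log hx0, Complex.log_exp h1 h2] at hE

lemma Sp_sub' {x y : ℂ} (hx : Sp x) (hy : Sp y) (hx0 : x ≠ 0) (hxarg : x.arg ≠ π)
    (h1 : y.im = -π) : Sp (x - y - 2 * π * Complex.I) := by
  have hE := Sp_E (Sp_log hx hx0 hxarg) (Sp_exp hy) (Complex.exp_ne_zero _)
  have hper : Complex.exp y = Complex.exp (y + 2 * π * Complex.I) := by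
    rw [Complex.exp_add, Complex.exp_two_pi_mul_I, mul_one]
  rw [Complex.exp_log hx0, hper, Complex.log_exp ?_ ?_] at hE
  · convert hE using 1; ring
  · simp [h1]; positivity
  · simp [h1]; linarith [Real.pi_pos]

open Complex Real

lemma ne_zero_of_re_pos {z : ℂ} (h : 0 < z.re) : z ≠ 0 := fun hz => by simp [hz] at h
lemma ne_zero_of_im_ne {z : ℂ} (h : z.im ≠ 0) : z ≠ 0 := fun hz => by simp [hz] at h
lemma arg_ne_pi_of_re_pos {z : ℂ} (h : 0 < z.re) : z.arg ≠ π :=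
  fun hp => absurd (Complex.arg_eq_pi_iff.mp hp).1 (by linarith)
lemma arg_ne_pi_of_im_ne {z : ℂ} (h : z.im ≠ 0) : z.arg ≠ π :=
  fun hp => h (Complex.arg_eq_pi_iff.mp hp).2

lemma Sp_subA {x y : ℂ} (hx : Sp x) (hy : Sp y) (h : 0 < x.re ∨ x.im ≠ 0)
    (h1 : -π < y.im) (h2 : y.im ≤ π) : Sp (x - y) := by
  rcases h with h | h
  · exact Sp_sub hx hy (_root_.ne_zero_of_re_pos h) (arg_ne_pi_of_re_pos h) h1 h2
  · exact Sp_sub hx hy (ne_zero_of_im_ne h) (arg_ne_pi_of_im_ne h) h1 h2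

lemma Sp_subA' {x y : ℂ} (hx : Sp x) (hy : Sp y) (h : 0 < x.re ∨ x.im ≠ 0)
    (h1 : y.im = -π) : Sp (x - y - 2 * π * Complex.I) := by
  rcases h with h | h
  · exact Sp_sub' hx hy (_root_.ne_zero_of_re_pos h) (arg_ne_pi_of_re_pos h) h1
  · exact Sp_sub' hx hy (ne_zero_of_im_ne h) (arg_ne_pi_of_im_ne h) h1

lemma exp_real_im {z : ℂ} (h : z.im = 0) : (Complex.exp z).im = 0 := by
  rw [Complex.exp_im, h, Real.sin_zero, mul_zero]
lemma exp_real_re_pos {z : ℂ} (h : z.im = 0) : 0 < (Complex.exp z).re := by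
  rw [Complex.exp_re, h, Real.cos_zero, mul_one]; exact Real.exp_pos _

noncomputable def xsm : ℂ := Complex.exp (1 - Complex.exp 1)

lemma xsm_im : xsm.im = 0 := exp_real_im (by simp [exp_one_im])
lemma xsm_re_pos : 0 < xsm.re := exp_real_re_pos (by simp [exp_one_im])
lemma Sp_xsm : Sp xsm := by
  refine Sp_exp (Sp_subA Sp_one (Sp_exp Sp_one) (Or.inl ?_) ?_ ?_) <;>
    simp [exp_one_im, Real.pi_pos, Real.pi_pos.le]

lemma Sp_neg_one : Sp (-1 : ℂ) := by
  have h1 : Sp (1 - xsm) := Sp_subA Sp_one Sp_xsm (by norm_num) (by rw [xsm_im]; linarith [Real.pi_pos]) (by rw [xsm_im]; exact Real.pi_pos.le)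
  have hre1 : (1 - xsm).re < 1 := by simp [Complex.sub_re, xsm_re_pos]
  have hre1' : 0 < (1 - xsm).re := by
    simp only [Complex.sub_re, Complex.one_re, sub_pos]
    calc xsm.re = Real.exp ((1 - Complex.exp 1).re) := by
          rw [xsm, Complex.exp_re, (by simp [exp_one_im] : (1 - Complex.exp 1).im = 0),
            Real.cos_zero, mul_one]
      _ < 1 := by
          rw [Real.exp_lt_one_iff]
          have h : (Complex.exp 1).re = Real.exp 1 := by
            rw [show (1:ℂ) = ((1:ℝ):ℂ) by norm_num, Complex.exp_ofReal_re]
          simp only [Complex.sub_re, Complex.one_re, h]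
          linarith [Real.exp_one_gt_d9]
  have hmx : Sp (-xsm) := by
    have := Sp_subA h1 Sp_one (Or.inl hre1') (by simp; linarith [Real.pi_pos]) (by simp [Real.pi_pos.le])
    convert this using 1; ring
  have hpx : Sp (1 + xsm) := by
    have := Sp_subA Sp_one hmx (by norm_num) (by simp [xsm_im]; linarith [Real.pi_pos]) (by simp [xsm_im, Real.pi_pos.le])
    convert this using 1; ring
  have := Sp_subA Sp_xsm hpx (Or.inl xsm_re_pos) (by simp [xsm_im]; linarith [Real.pi_pos]) (by simp [xsm_im, Real.pi_pos.le])
  convert this using 1; ring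

lemma Sp_two : Sp (2 : ℂ) := by
  have := Sp_subA Sp_one Sp_neg_one (by norm_num) (by simp; linarith [Real.pi_pos]) (by simp [Real.pi_pos.le])
  convert this using 1; ring

/-- negation for strictly interior imaginary part -/
lemma Sp_neg_small {y : ℂ} (hy : Sp y) (h1 : -π < y.im) (h2 : y.im < π) : Sp (-y) := by
  have u1 : Sp (1 - y) := Sp_subA Sp_one hy (by norm_num) h1 h2.le
  have u2 : Sp (1 + y) := by
    have := Sp_subA Sp_two u1 (by norm_num) (by simp; linarith) (by simp; linarith)
    convert this using 1; ring
  have := Sp_subA Sp_one u2 (by norm_num) (by simp; linarith) (by simp; linarith)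
  convert this using 1; ring

lemma Sp_neg_pi_I : Sp (-(↑π * Complex.I)) := by
  have h1 : Sp (1 - Complex.log (-1)) := Sp_one_sub_log Sp_neg_one (by norm_num)
  rw [Complex.log_neg_one] at h1
  have := Sp_subA h1 Sp_one (Or.inl (by simp)) (by simp; linarith [Real.pi_pos]) (by simp [Real.pi_pos.le])
  convert this using 1; ring

open Complex Real

lemma two_pi_I_im : (2 * (π:ℝ) * Complex.I).im = 2 * π := by simp
lemma two_pi_I_re : (2 * (π:ℝ) * Complex.I).re = 0 := by simp

lemma one_sub_exp_one_eq : (1 : ℂ) - Complex.exp 1 = ((1 - Real.exp 1 : ℝ) : ℂ) := by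
  push_cast
  ring

lemma one_sub_exp_one_neg : (1 : ℝ) - Real.exp 1 < 0 := by linarith [Real.exp_one_gt_d9]

lemma Sp_one_sub_exp_one : Sp ((1:ℂ) - Complex.exp 1) :=
  Sp_subA Sp_one (Sp_exp Sp_one) (by norm_num)
    (by rw [exp_one_im]; linarith [Real.pi_pos]) (by rw [exp_one_im]; exact Real.pi_pos.le)

noncomputable def cV : ℂ := 1 - Complex.log (1 - Complex.exp 1)

lemma cV_im : cV.im = -π := by
  rw [cV, Complex.sub_im, Complex.one_im, Complex.log_im, one_sub_exp_one_eq,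
    Complex.arg_ofReal_of_neg one_sub_exp_one_neg]
  ring

lemma Sp_cV : Sp cV :=
  Sp_one_sub_log Sp_one_sub_exp_one
    (by rw [one_sub_exp_one_eq]; exact_mod_cast ne_of_lt one_sub_exp_one_neg)

lemma Sp_one_sub_pi_I : Sp (1 - (π:ℝ) * Complex.I) := by
  have h1 : Sp (1 - Complex.log (-1)) := Sp_one_sub_log Sp_neg_one (by norm_num)
  rwa [Complex.log_neg_one] at h1

noncomputable def cG : ℂ := Complex.log (1 - (π:ℝ) * Complex.I)

lemma one_sub_pi_I_re : ((1:ℂ) - (π:ℝ) * Complex.I).re = 1 := by simp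
lemma one_sub_pi_I_im : ((1:ℂ) - (π:ℝ) * Complex.I).im = -π := by simp

lemma Sp_cG : Sp cG :=
  Sp_log Sp_one_sub_pi_I (_root_.ne_zero_of_re_pos (by rw [one_sub_pi_I_re]; norm_num))
    (arg_ne_pi_of_re_pos (by rw [one_sub_pi_I_re]; norm_num))

lemma cG_im_neg : cG.im < 0 := by
  rw [cG, Complex.log_im]
  exact Complex.arg_neg_iff.mpr (by rw [one_sub_pi_I_im]; linarith [Real.pi_pos])

lemma cG_im_gt : -(π/2) < cG.im := by
  rw [cG, Complex.log_im]
  exact Complex.neg_pi_div_two_lt_arg_iff.mpr (Or.inl (by rw [one_sub_pi_I_re]; norm_num))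

-- Y = cV - cG
lemma Sp_cY : Sp (cV - cG) :=
  Sp_subA Sp_cV Sp_cG (Or.inr (by rw [cV_im]; linarith [Real.pi_pos]))
    (by linarith [cG_im_gt, Real.pi_pos]) (by linarith [cG_im_neg, Real.pi_pos])

lemma cY_im_lt : (cV - cG).im < 0 := by
  rw [Complex.sub_im, cV_im]; linarith [cG_im_gt, Real.pi_pos]
lemma cY_im_gt : -π < (cV - cG).im := by
  rw [Complex.sub_im, cV_im]; linarith [cG_im_neg]

-- h = cG - cV - 2πI ∈ Sp, and cX := cG - cV = h + 2πI ∈ Sp via log (exp h)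
lemma Sp_cX : Sp (cG - cV) := by
  have hh : Sp (cG - cV - 2 * (π:ℝ) * Complex.I) :=
    Sp_subA' Sp_cG Sp_cV (Or.inr (by linarith [cG_im_neg])) cV_im
  have him : (cG - cV - 2 * (π:ℝ) * Complex.I + 2 * (π:ℝ) * Complex.I).im = cG.im + π := by
    simp [cV_im]; try ring
  have key : Complex.log (Complex.exp (cG - cV - 2 * (π:ℝ) * Complex.I)) = cG - cV := by
    rw [show Complex.exp (cG - cV - 2 * (π:ℝ) * Complex.I)
        = Complex.exp (cG - cV - 2 * (π:ℝ) * Complex.I + 2 * (π:ℝ) * Complex.I) by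
      rw [Complex.exp_add, Complex.exp_two_pi_mul_I, mul_one]]
    rw [Complex.log_exp (by rw [him]; linarith [cG_im_gt, Real.pi_pos])
      (by rw [him]; linarith [cG_im_neg])]
    ring
  have harg : (Complex.exp (cG - cV - 2 * (π:ℝ) * Complex.I)).arg ≠ π := by
    intro hp
    have := Complex.log_im (Complex.exp (cG - cV - 2 * (π:ℝ) * Complex.I))
    rw [key, hp, Complex.sub_im, cV_im] at this
    have := cG_im_neg; linarith
  have := Sp_log (Sp_exp hh) (Complex.exp_ne_zero _) harg
  rwa [key] at this

lemma cX_im : (cG - cV).im = cG.im + π := by rw [Complex.sub_im, cV_im]; ring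
lemma cX_im_pos : 0 < (cG - cV).im := by rw [cX_im]; linarith [cG_im_gt, Real.pi_pos]
lemma cX_im_lt : (cG - cV).im < π := by rw [cX_im]; linarith [cG_im_neg]

/-- add 2πI when the imaginary part is exactly -π -/
lemma Sp_add2pi_bd {z : ℂ} (hz : Sp z) (h : z.im = -π) : Sp (z + 2 * (π:ℝ) * Complex.I) := by
  have hw : Sp (cG - cV - z - 2 * (π:ℝ) * Complex.I) :=
    Sp_subA' Sp_cX hz (Or.inr (ne_of_gt cX_im_pos)) h
  have hwim : (cG - cV - z - 2 * (π:ℝ) * Complex.I).im = cG.im := by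
    simp [cV_im, h]; ring
  have := Sp_subA Sp_cX hw (Or.inr (ne_of_gt cX_im_pos))
    (by rw [hwim]; linarith [cG_im_gt, Real.pi_pos]) (by rw [hwim]; linarith [cG_im_neg, Real.pi_pos])
  convert this using 1; ring

/-- add 2πI when the imaginary part is in (-3π, -π) -/
lemma Sp_add2pi_int {z : ℂ} (hz : Sp z) (h1 : -(3*π) < z.im) (h2 : z.im < -π) :
    Sp (z + 2 * (π:ℝ) * Complex.I) := by
  have him : (z + 2 * (π:ℝ) * Complex.I).im = z.im + 2*π := by simp
  have key : Complex.log (Complex.exp z) = z + 2 * (π:ℝ) * Complex.I := by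
    rw [show Complex.exp z = Complex.exp (z + 2 * (π:ℝ) * Complex.I) by
      rw [Complex.exp_add, Complex.exp_two_pi_mul_I, mul_one]]
    rw [Complex.log_exp (by rw [him]; linarith) (by rw [him]; linarith [Real.pi_pos])]
  have harg : (Complex.exp z).arg ≠ π := by
    intro hp
    have := Complex.log_im (Complex.exp z)
    rw [key, hp, him] at this
    linarith [Real.pi_pos]
  have := Sp_log (Sp_exp hz) (Complex.exp_ne_zero _) harg
  rwa [key] at this

lemma Sp_pi_I : Sp ((π:ℝ) * Complex.I) := by
  have := Sp_add2pi_bd Sp_neg_pi_I (by simp)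
  convert this using 1; ring

lemma Sp_cE1 : Sp (cV + 2 * (π:ℝ) * Complex.I) := Sp_add2pi_bd Sp_cV cV_im
lemma cE1_im : (cV + 2 * (π:ℝ) * Complex.I).im = π := by simp [cV_im]; ring

lemma Sp_two_pi_I : Sp (2 * (π:ℝ) * Complex.I) := by
  have hX : Sp (cV + 2 * (π:ℝ) * Complex.I - cG) :=
    Sp_subA Sp_cE1 Sp_cG (Or.inr (by rw [cE1_im]; linarith [Real.pi_pos]))
      (by linarith [cG_im_gt, Real.pi_pos]) (by linarith [cG_im_neg, Real.pi_pos])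
  have := Sp_subA hX Sp_cY
    (Or.inr (by rw [Complex.sub_im, cE1_im]; intro hc; have := cG_im_neg; linarith [Real.pi_pos]))
    cY_im_gt (by linarith [cY_im_lt, Real.pi_pos])
  convert this using 1; ring

/-- subtract 2πI when imaginary part is in [0, π] -/
lemma Sp_sub2pi {q : ℂ} (hq : Sp q) (h1 : 0 ≤ q.im) (h2 : q.im ≤ π) :
    Sp (q - 2 * (π:ℝ) * Complex.I) := by
  have hw : Sp (cV + 2 * (π:ℝ) * Complex.I - q) :=
    Sp_subA Sp_cE1 hq (Or.inr (by rw [cE1_im]; linarith [Real.pi_pos]))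
      (by linarith [Real.pi_pos]) h2
  have hwim : (cV + 2 * (π:ℝ) * Complex.I - q).im = π - q.im := by simp [cV_im]; ring
  have := Sp_subA Sp_cV hw (Or.inr (by rw [cV_im]; linarith [Real.pi_pos]))
    (by rw [hwim]; linarith [Real.pi_pos]) (by rw [hwim]; linarith)
  convert this using 1; ring

/-- negation for imaginary part in [-π, π] -/
lemma Sp_neg {b : ℂ} (hb : Sp b) (h1 : -π ≤ b.im) (h2 : b.im ≤ π) : Sp (-b) := by
  rcases eq_or_lt_of_le h2 with he | hlt
  · -- b.im = π
    have ha : Sp (2 * (π:ℝ) * Complex.I - b) :=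
      Sp_subA Sp_two_pi_I hb (Or.inr (by rw [two_pi_I_im]; positivity))
        (by linarith [Real.pi_pos]) h2
    have haim : (2 * (π:ℝ) * Complex.I - b).im = π := by
      rw [Complex.sub_im, two_pi_I_im, ← he]; ring
    have := Sp_sub2pi ha (by rw [haim]; exact Real.pi_pos.le) (le_of_eq haim)
    convert this using 1; ring
  rcases eq_or_lt_of_le h1 with he | hgt
  · -- b.im = -π
    have hb' := Sp_add2pi_bd hb he.symm
    have := Sp_subA Sp_two_pi_I hb' (Or.inr (by rw [two_pi_I_im]; positivity))
      (by simp [← he]; linarith [Real.pi_pos]) (by simp [← he]; linarith)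
    convert this using 1; ring
  · exact Sp_neg_small hb hgt hlt

open Complex Real

lemma shift_im (z : ℂ) (k : ℤ) :
    (z + (k:ℂ) * (2 * (π:ℝ) * Complex.I)).im = z.im + 2*π*(k:ℝ) := by
  simp; ring

lemma aux_ne (k : ℤ) : 2*π*(k:ℝ) + cG.im ≠ 0 := by
  rcases le_or_gt (k:ℝ) 0 with h | h
  · have : 2*π*(k:ℝ) ≤ 0 := by nlinarith [Real.pi_pos]
    linarith [cG_im_gt, cG_im_neg, Real.pi_pos]
  · have h1 : (1:ℤ) ≤ k := by exact_mod_cast (by exact_mod_cast h : (0:ℤ) < k)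
    have : (1:ℝ) ≤ (k:ℝ) := by exact_mod_cast h1
    nlinarith [Real.pi_pos, cG_im_gt]

lemma aux_ne2 (k : ℤ) : 2*π*(k:ℝ) - π ≠ 0 := by
  rcases le_or_gt (k:ℝ) 0 with h | h
  · nlinarith [Real.pi_pos]
  · have h1 : (1:ℤ) ≤ k := by exact_mod_cast (by exact_mod_cast h : (0:ℤ) < k)
    have : (1:ℝ) ≤ (k:ℝ) := by exact_mod_cast h1
    nlinarith [Real.pi_pos]

lemma aux_ne3 (k : ℤ) : 2*π*(k:ℝ) + π + 2*cG.im ≠ 0 := by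
  rcases le_or_gt k (-1) with h | h
  · have : (k:ℝ) ≤ -1 := by exact_mod_cast h
    nlinarith [Real.pi_pos, cG_im_neg]
  · have h1 : (0:ℤ) ≤ k := by omega
    have : (0:ℝ) ≤ (k:ℝ) := by exact_mod_cast h1
    nlinarith [Real.pi_pos, cG_im_gt]

lemma Sp_M' : Sp (2 * (π:ℝ) * Complex.I - 2*(cG - cV)) := by
  have hm2x : Sp (-(2*(cG - cV))) := by
    have := Sp_subA Sp_cY Sp_cX (Or.inr (ne_of_lt cY_im_lt))
      (by linarith [cX_im_pos, Real.pi_pos]) (le_of_lt cX_im_lt)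
    convert this using 1 <;> ring
  have him : (-(2*(cG - cV))).im = -2*cG.im - 2*π := by
    simp [cV_im]; ring
  have := Sp_add2pi_int hm2x (by rw [him]; linarith [cG_im_gt, cG_im_neg, Real.pi_pos]) (by rw [him]; linarith [cG_im_gt, cG_im_neg, Real.pi_pos])
  convert this using 1 <;> ring

lemma M'_im : (2 * (π:ℝ) * Complex.I - 2*(cG - cV)).im = -2*cG.im := by
  simp [cV_im]; ring

lemma Sp_TM : Sp (2*(cG - cV) - 2 * (π:ℝ) * Complex.I) := by
  have := Sp_neg_small Sp_M' (by rw [M'_im]; linarith [cG_im_gt, cG_im_neg, Real.pi_pos])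
    (by rw [M'_im]; linarith [cG_im_gt, cG_im_neg, Real.pi_pos])
  convert this using 1 <;> ring

lemma TM_im : (2*(cG - cV) - 2 * (π:ℝ) * Complex.I).im = 2*cG.im := by
  simp [cV_im]; ring

lemma Sp_eK : ∀ k : ℤ, Sp (cV + (k:ℂ) * (2 * (π:ℝ) * Complex.I)) := by
  have cY_im : (cV - cG).im = -π - cG.im := by rw [Complex.sub_im, cV_im]
  have step_up : ∀ k : ℤ, Sp (cV + (k:ℂ) * (2 * (π:ℝ) * Complex.I)) →
      Sp (cV + ((k:ℂ)+1) * (2 * (π:ℝ) * Complex.I)) := by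
    intro k h
    have a1 := Sp_subA h Sp_cY
      (Or.inr (by rw [shift_im, cV_im]; intro hc; exact aux_ne2 k (by linarith)))
      (by rw [cY_im]; linarith [cG_im_gt, cG_im_neg, Real.pi_pos]) (by rw [cY_im]; linarith [cG_im_gt, cG_im_neg, Real.pi_pos])
    have a1_im : (cV + (k:ℂ) * (2 * (π:ℝ) * Complex.I) - (cV - cG)).im = 2*π*(k:ℝ) + cG.im := by
      rw [Complex.sub_im, shift_im, cV_im, cY_im]; ring
    have a2 := Sp_subA a1 Sp_cY (Or.inr (by rw [a1_im]; exact aux_ne k))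
      (by rw [cY_im]; linarith [cG_im_gt, cG_im_neg, Real.pi_pos]) (by rw [cY_im]; linarith [cG_im_gt, cG_im_neg, Real.pi_pos])
    have a2_im : (cV + (k:ℂ) * (2 * (π:ℝ) * Complex.I) - (cV - cG) - (cV - cG)).im
        = 2*π*(k:ℝ) + π + 2*cG.im := by
      rw [Complex.sub_im, a1_im, cY_im]; ring
    have := Sp_subA a2 Sp_TM (Or.inr (by rw [a2_im]; exact aux_ne3 k))
      (by rw [TM_im]; linarith [cG_im_gt, cG_im_neg, Real.pi_pos]) (by rw [TM_im]; linarith [cG_im_gt, cG_im_neg, Real.pi_pos])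
    convert this using 1 <;> ring
  have step_down : ∀ k : ℤ, Sp (cV + (k:ℂ) * (2 * (π:ℝ) * Complex.I)) →
      Sp (cV + ((k:ℂ)-1) * (2 * (π:ℝ) * Complex.I)) := by
    intro k h
    have b1 := Sp_subA h Sp_M'
      (Or.inr (by rw [shift_im, cV_im]; intro hc; exact aux_ne2 k (by linarith)))
      (by rw [M'_im]; linarith [cG_im_gt, cG_im_neg, Real.pi_pos]) (by rw [M'_im]; linarith [cG_im_gt, cG_im_neg, Real.pi_pos])
    have b1_im : (cV + (k:ℂ) * (2 * (π:ℝ) * Complex.I)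
        - (2 * (π:ℝ) * Complex.I - 2*(cG - cV))).im = 2*π*((k:ℝ)-1) + π + 2*cG.im := by
      rw [Complex.sub_im, shift_im, cV_im, M'_im]; ring
    have hb1ne : (2*π*((k:ℝ)-1) + π + 2*cG.im) ≠ 0 := by
      have := aux_ne3 (k-1); push_cast at this; convert this using 2 <;> ring
    have b2 := Sp_subA b1 Sp_cX (Or.inr (by rw [b1_im]; exact hb1ne))
      (by linarith [cX_im_pos, Real.pi_pos]) (le_of_lt cX_im_lt)
    have b2_im : (cV + (k:ℂ) * (2 * (π:ℝ) * Complex.I)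
        - (2 * (π:ℝ) * Complex.I - 2*(cG - cV)) - (cG - cV)).im = 2*π*((k:ℝ)-1) + cG.im := by
      rw [Complex.sub_im, b1_im, cX_im]; ring
    have hb2ne : (2*π*((k:ℝ)-1) + cG.im) ≠ 0 := by
      have := aux_ne (k-1); push_cast at this; convert this using 2 <;> ring
    have := Sp_subA b2 Sp_cX (Or.inr (by rw [b2_im]; exact hb2ne))
      (by linarith [cX_im_pos, Real.pi_pos]) (le_of_lt cX_im_lt)
    convert this using 1 <;> ring
  intro k
  induction k using Int.induction_on with
  | zero => simpa using Sp_cV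
  | succ n ih => have := step_up n ih; convert this using 2 <;> (push_cast; ring)
  | pred n ih => have := step_down (-n) ih; convert this using 2 <;> (push_cast; ring)

lemma Sp_CK (k : ℤ) : Sp ((k:ℂ) * (2 * (π:ℝ) * Complex.I)) := by
  have h1 : Sp (cV + (1:ℂ) * (2 * (π:ℝ) * Complex.I)) := by
    have := Sp_eK 1; simpa using this
  have e1_im : (cV + (1:ℂ) * (2 * (π:ℝ) * Complex.I)).im = π := by
    simp [cV_im]; ring
  have := Sp_subA (Sp_eK (k+1)) (by simpa using h1)
    (Or.inr (by rw [shift_im, cV_im]; intro hc; exact aux_ne2 (k+1) (by push_cast at hc ⊢; linarith)))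
    (by rw [e1_im]; linarith [Real.pi_pos]) (le_of_eq e1_im)
  convert this using 1; push_cast; ring

open Complex Real

lemma CK_im {k : ℤ} : ((k:ℂ) * (2 * (π:ℝ) * Complex.I)).im = 2*π*(k:ℝ) := by
  simpa using shift_im 0 k

lemma CK_im_ne {k : ℤ} (hk : k ≠ 0) : ((k:ℂ) * (2 * (π:ℝ) * Complex.I)).im ≠ 0 := by
  rw [CK_im]
  intro hc
  have hkr : (k:ℝ) ≠ 0 := Int.cast_ne_zero.mpr hk
  have := Real.pi_pos
  rcases hkr.lt_or_gt with h | h <;> nlinarith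

lemma Sp_shift_norm {u : ℂ} (hu : Sp u) (h1 : -π ≤ u.im) (h2 : u.im ≤ π) (k : ℤ) :
    Sp (u + (k:ℂ) * (2 * (π:ℝ) * Complex.I)) := by
  by_cases hk : k = 0
  · simpa [hk] using hu
  rcases lt_or_eq_of_le h2 with hlt | heq
  · have hnu : Sp (-u) := Sp_neg hu h1 h2
    have := Sp_subA (Sp_CK k) hnu (Or.inr (CK_im_ne hk))
      (by simp; linarith) (by simp; linarith)
    convert this using 1 <;> ring
  · -- u.im = π
    have hu' : Sp (u - 2 * (π:ℝ) * Complex.I) :=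
      Sp_sub2pi hu (by rw [heq]; exact Real.pi_pos.le) h2
    have hu'_im : (u - 2 * (π:ℝ) * Complex.I).im = -π := by
      simp [heq]; ring
    by_cases hk1 : k = -1
    · subst hk1; convert hu' using 1; push_cast; ring
    · have hnu' : Sp (-(u - 2 * (π:ℝ) * Complex.I)) :=
        Sp_neg hu' (le_of_eq hu'_im.symm) (by rw [hu'_im]; linarith [Real.pi_pos])
      have := Sp_subA (Sp_CK (k+1)) hnu' (Or.inr (CK_im_ne (by omega)))
        (by rw [Complex.neg_im, hu'_im]; linarith [Real.pi_pos])
        (by rw [Complex.neg_im, hu'_im]; linarith [Real.pi_pos])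
      convert this using 1 <;> push_cast <;> ring

lemma Sp_log_full {z : ℂ} (hz : Sp z) (h0 : z ≠ 0) : Sp (Complex.log z) := by
  by_cases harg : z.arg = π
  · have hu : Sp (1 - Complex.log z) := Sp_one_sub_log hz h0
    have huim : (1 - Complex.log z).im = -π := by
      rw [Complex.sub_im, Complex.one_im, Complex.log_im, harg]; ring
    have hs := Sp_subA' Sp_one hu (Or.inl (by norm_num)) huim
    have hsim : ((1:ℂ) - (1 - Complex.log z) - 2 * (π:ℝ) * Complex.I).im = -π := by
      simp [Complex.log_im, harg]; ring
    have := Sp_add2pi_bd hs hsim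
    convert this using 1; ring
  · exact Sp_log hz h0 harg

lemma Sp_shift_any {u : ℂ} (hu : Sp u) (k : ℤ) :
    Sp (u + (k:ℂ) * (2 * (π:ℝ) * Complex.I)) := by
  have hl : Sp (Complex.log (Complex.exp u)) :=
    Sp_log_full (Sp_exp hu) (Complex.exp_ne_zero u)
  obtain ⟨n, hn⟩ := Complex.exp_eq_exp_iff_exists_int.mp
    (Complex.exp_log (Complex.exp_ne_zero u))
  have := Sp_shift_norm hl (Complex.neg_pi_lt_log_im _).le (Complex.log_im_le_pi _) (k - n)
  rw [hn] at this
  convert this using 1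
  push_cast; ring

lemma Sp_neg_any {z : ℂ} (hz : Sp z) : Sp (-z) := by
  have hl : Sp (Complex.log (Complex.exp z)) :=
    Sp_log_full (Sp_exp hz) (Complex.exp_ne_zero z)
  obtain ⟨n, hn⟩ := Complex.exp_eq_exp_iff_exists_int.mp
    (Complex.exp_log (Complex.exp_ne_zero z))
  have hneg : Sp (-(Complex.log (Complex.exp z))) :=
    Sp_neg hl (Complex.neg_pi_lt_log_im _).le (Complex.log_im_le_pi _)
  have := Sp_shift_any hneg n
  rw [hn] at this
  convert this using 1
  ring

open Complex Real

lemma Sp_add_norm {a b : ℂ} (ha : Sp a) (hb : Sp b) (ha1 : -π < a.im) (ha2 : a.im ≤ π)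
    (hb1 : -π < b.im) (hb2 : b.im ≤ π) :
    ∃ δ : ℤ, Sp (a + b + (δ:ℂ) * (2 * (π:ℝ) * Complex.I)) := by
  by_cases hA0 : a = 0
  · exact ⟨0, by simpa [hA0] using hb⟩
  by_cases hB0 : b = 0
  · exact ⟨0, by simpa [hB0] using ha⟩
  by_cases hAim : a.im = π
  · have haim_ne : a.im ≠ 0 := by rw [hAim]; exact Real.pi_ne_zero
    by_cases hBim : b.im = π
    · refine ⟨-1, ?_⟩
      have := Sp_sub' ha (Sp_neg hb hb1.le hb2) (ne_zero_of_im_ne haim_ne)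
        (arg_ne_pi_of_im_ne haim_ne) (by rw [Complex.neg_im, hBim])
      convert this using 1; push_cast; ring
    · refine ⟨0, ?_⟩
      have := Sp_sub ha (Sp_neg hb hb1.le hb2) (ne_zero_of_im_ne haim_ne)
        (arg_ne_pi_of_im_ne haim_ne)
        (by rw [Complex.neg_im]; exact neg_lt_neg_iff.mpr (lt_of_le_of_ne hb2 hBim))
        (by rw [Complex.neg_im]; linarith)
      convert this using 1; push_cast; ring
  by_cases hBarg : b.arg = π
  · have hbre : b.re < 0 := (Complex.arg_eq_pi_iff.mp hBarg).1
    have hbim0 : b.im = 0 := (Complex.arg_eq_pi_iff.mp hBarg).2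
    by_cases hAarg : a.arg = π
    · have hare : a.re < 0 := (Complex.arg_eq_pi_iff.mp hAarg).1
      have haim0 : a.im = 0 := (Complex.arg_eq_pi_iff.mp hAarg).2
      have hna : Sp (-a) := Sp_neg ha ha1.le ha2
      have ht : Sp (-a - b) := Sp_sub hna hb
        (_root_.ne_zero_of_re_pos (by rw [Complex.neg_re]; linarith))
        (arg_ne_pi_of_re_pos (by rw [Complex.neg_re]; linarith))
        (by rw [hbim0]; linarith [Real.pi_pos]) (by rw [hbim0]; exact Real.pi_pos.le)
      have := Sp_neg_small ht
        (by rw [Complex.sub_im, Complex.neg_im, haim0, hbim0]; simpa using Real.pi_pos)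
        (by rw [Complex.sub_im, Complex.neg_im, haim0, hbim0]; simpa using Real.pi_pos)
      exact ⟨0, by convert this using 1; push_cast; ring⟩
    · refine ⟨0, ?_⟩
      have := Sp_sub ha (Sp_neg hb hb1.le hb2) hA0 hAarg
        (by rw [Complex.neg_im, hbim0]; simpa using Real.pi_pos)
        (by rw [Complex.neg_im, hbim0]; simpa using Real.pi_pos.le)
      convert this using 1; push_cast; ring
  · refine ⟨0, ?_⟩
    have := Sp_sub hb (Sp_neg ha ha1.le ha2) hB0 hBarg
      (by rw [Complex.neg_im]; exact neg_lt_neg_iff.mpr (lt_of_le_of_ne ha2 hAim))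
      (by rw [Complex.neg_im]; linarith)
    convert this using 1; push_cast; ring

lemma Sp_add {z w : ℂ} (hz : Sp z) (hw : Sp w) : Sp (z + w) := by
  have hLz : Sp (Complex.log (Complex.exp z)) :=
    Sp_log_full (Sp_exp hz) (Complex.exp_ne_zero z)
  have hLw : Sp (Complex.log (Complex.exp w)) :=
    Sp_log_full (Sp_exp hw) (Complex.exp_ne_zero w)
  obtain ⟨n, hn⟩ := Complex.exp_eq_exp_iff_exists_int.mp
    (Complex.exp_log (Complex.exp_ne_zero z))
  obtain ⟨m, hm⟩ := Complex.exp_eq_exp_iff_exists_int.mp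
    (Complex.exp_log (Complex.exp_ne_zero w))
  obtain ⟨δ, hδ⟩ := Sp_add_norm hLz hLw (Complex.neg_pi_lt_log_im _) (Complex.log_im_le_pi _)
    (Complex.neg_pi_lt_log_im _) (Complex.log_im_le_pi _)
  have := Sp_shift_any hδ (-(n + m + δ))
  rw [hn, hm] at this
  convert this using 1
  push_cast; ring

lemma Sp_mul {z w : ℂ} (hz : Sp z) (hw : Sp w) : Sp (z * w) := by
  by_cases hz0 : z = 0
  · simpa [hz0] using Sp_zero
  by_cases hw0 : w = 0
  · simpa [hw0] using Sp_zero
  obtain ⟨δ, hδ⟩ := Sp_add_norm (Sp_log_full hz hz0) (Sp_log_full hw hw0)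
    (Complex.neg_pi_lt_log_im _) (Complex.log_im_le_pi _)
    (Complex.neg_pi_lt_log_im _) (Complex.log_im_le_pi _)
  have key : Complex.exp (Complex.log z + Complex.log w + (δ:ℂ) * (2 * (π:ℝ) * Complex.I))
      = z * w := by
    rw [Complex.exp_add, Complex.exp_add, Complex.exp_log hz0, Complex.exp_log hw0,
      Complex.exp_int_mul_two_pi_mul_I, mul_one]
  have := Sp_exp hδ
  rwa [key] at this

lemma Sp_inv {z : ℂ} (hz : Sp z) : Sp z⁻¹ := by
  by_cases hz0 : z = 0
  · simpa [hz0] using Sp_zero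
  have h := Sp_neg (Sp_log_full hz hz0) (Complex.neg_pi_lt_log_im _).le (Complex.log_im_le_pi _)
  have := Sp_exp h
  rwa [Complex.exp_neg, Complex.exp_log hz0] at this

lemma forward_dir (F : Subfield ℂ) (hF : ExpLogClosed F) :
    ∀ e : Expr, ∀ z : ℂ, eval e = some z → z ∈ F := by
  intro e
  induction e with
  | one =>
    intro z he
    have : (1 : ℂ) = z := by simpa [eval] using he
    exact this ▸ F.one_mem
  | E a b iha ihb =>
    intro z he
    rw [eval] at he
    cases ha : eval a with
    | none => rw [ha] at he; simp at he
    | some x =>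
      cases hb : eval b with
      | none => rw [ha, hb] at he; simp at he
      | some y =>
        rw [ha, hb] at he
        by_cases hy : y = 0
        · simp [hy] at he
        · simp only [hy, if_false, Option.some.injEq] at he
          exact he ▸ F.sub_mem (hF.1 x (iha x ha)) (hF.2 y (ihb y hb) hy)

theorem eml_eq_el :
    {z : ℂ | ∃ e : Expr, eval e = some z} =
      {z : ℂ | ∀ F : Subfield ℂ, ExpLogClosed F → z ∈ F} := by
  ext z
  simp only [Set.mem_setOf_eq]
  constructor
  · rintro ⟨e, he⟩ F hF
    exact forward_dir F hF e z he
  · intro h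
    let F : Subfield ℂ :=
      { carrier := {z | Sp z}
        mul_mem' := fun h1 h2 => Sp_mul h1 h2
        one_mem' := Sp_one
        add_mem' := fun h1 h2 => Sp_add h1 h2
        zero_mem' := Sp_zero
        neg_mem' := fun h1 => Sp_neg_any h1
        inv_mem' := fun _ hx => Sp_inv hx }
    exact h F ⟨fun x hx => Sp_exp hx, fun x hx h0 => Sp_log_full hx h0⟩
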